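/- arXiv:2404.16679 — 6 statements merged into one kernel-verified Lean document; each statement's English description precedes it below -/
import Mathlib

section
/- For every α ∈ (0, π/2), the point (p(α), q(α)) is the unique maximizer of the linear functional (p,q) ↦ p·cos α + q·sin α over the set {(p,q) ∈ ℝ² : K(p,q) = 0}. -/
open Real

theorem stmt_3 (γ : ℝ) (hγ : γ ∈ Set.Ioo (0:ℝ) 1)
    (K : ℝ → ℝ → ℝ) (hK : ∀ p q, K p q = (1/2) * (p - q)^2 + (1 - γ) * p + γ * q)
    (α : ℝ) (hα : α ∈ Set.Ioo 0 (π/2))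
    (pα qα : ℝ)
    (hpα : pα = γ^2/2 - 1/(2*(1 + 1/Real.tan α)^2))
    (hqα : qα = (1 - γ)^2/2 - 1/(2*(1 + Real.tan α)^2)) :
    (∀ p q : ℝ, K p q = 0 → p * Real.cos α + q * Real.sin α ≤ pα * Real.cos α + qα * Real.sin α) ∧
    (∀ p q : ℝ, K p q = 0 →
      p * Real.cos α + q * Real.sin α = pα * Real.cos α + qα * Real.sin α →
      p = pα ∧ q = qα) := by
  obtain ⟨hα0, hα1⟩ := hα
  have hc : 0 < Real.cos α := Real.cos_pos_of_mem_Ioo ⟨by linarith [Real.pi_pos], hα1⟩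
  have hs : 0 < Real.sin α := Real.sin_pos_of_pos_of_lt_pi hα0 (by linarith [Real.pi_pos])
  set c := Real.cos α
  set sn := Real.sin α
  have hcs : 0 < c + sn := by linarith
  have hcsne : c + sn ≠ 0 := ne_of_gt hcs
  have ht : Real.tan α = sn / c := Real.tan_eq_sin_div_cos α
  have hp2 : pα = γ^2/2 - sn^2/(2*(c+sn)^2) := by
    rw [hpα, ht]; field_simp; all_goals ring
  have hq2 : qα = (1-γ)^2/2 - c^2/(2*(c+sn)^2) := by
    rw [hqα, ht]; field_simp; all_goals ring
  have hp3 : pα * (2*(c+sn)^2) = γ^2*(c+sn)^2 - sn^2 := by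
    rw [hp2]; field_simp; all_goals ring
  have hq3 : qα * (2*(c+sn)^2) = (1-γ)^2*(c+sn)^2 - c^2 := by
    rw [hq2]; field_simp; all_goals ring
  have hm' : ((pα - qα) * (c+sn)) * (2*(c+sn)^2) = (γ*c - (1-γ)*sn) * (2*(c+sn)^2) := by
    linear_combination (c+sn)*hp3 - (c+sn)*hq3
  have hm : (pα - qα) * (c + sn) = γ*c - (1-γ)*sn :=
    mul_right_cancel₀ (by positivity) hm'
  have key : ∀ p q : ℝ, K p q = 0 →
      (pα * c + qα * sn - (p * c + q * sn)) * (2*(c+sn)^3) =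
        ((p - q)*(c+sn) - (γ*c - (1-γ)*sn))^2 * (c+sn)^2 := by
    intro p q h
    rw [hK] at h
    linear_combination (c*(c+sn)) * hp3 + (sn*(c+sn)) * hq3 + (-2*(c+sn)^4) * h
  have hK0 : (1/2) * (pα - qα)^2 + (1 - γ) * pα + γ * qα = 0 := by
    have h4 : ((1/2) * (pα - qα)^2 + (1 - γ) * pα + γ * qα) * (4*(c+sn)^4) = 0 := by
      linear_combination (pα*(c+sn)^2 - qα*(c+sn)^2 + (γ^2-(1-γ)^2)/2*(c+sn)^2
          - (sn^2-c^2)/2 + 2*(1-γ)*(c+sn)^2) * hp3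
        + (-(pα*(c+sn)^2) + qα*(c+sn)^2 - (γ^2-(1-γ)^2)/2*(c+sn)^2
          + (sn^2-c^2)/2 + 2*γ*(c+sn)^2) * hq3
    have h5 : (4*(c+sn)^4) ≠ 0 := by positivity
    exact (mul_eq_zero.mp h4).resolve_right h5
  constructor
  · intro p q h
    have hk := key p q h
    have hT : (0:ℝ) < 2*(c+sn)^3 := by positivity
    have h2 : 0 * (2*(c+sn)^3) ≤ (pα * c + qα * sn - (p * c + q * sn)) * (2*(c+sn)^3) := by
      rw [zero_mul, hk]; positivity
    have h3 := (mul_le_mul_iff_of_pos_right hT).mp h2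
    linarith
  · intro p q h heq
    have hk := key p q h
    have hdz : pα * c + qα * sn - (p * c + q * sn) = 0 := by linarith
    have h0 : ((p - q)*(c+sn) - (γ*c - (1-γ)*sn))^2 * (c+sn)^2 = 0 := by
      linear_combination (-1) * hk + (2*(c+sn)^3) * hdz
    have hz : (p - q)*(c+sn) - (γ*c - (1-γ)*sn) = 0 := by
      rcases mul_eq_zero.mp h0 with h1 | h1
      · exact pow_eq_zero_iff (by norm_num) |>.mp h1
      · exact absurd (pow_eq_zero_iff (n := 2) (by norm_num) |>.mp h1) hcsne
    have hdiff : p - q = pα - qα := by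
      have h1 : (p - q)*(c+sn) = (pα - qα)*(c+sn) := by rw [hm]; linarith
      exact mul_right_cancel₀ hcsne h1
    rw [hK] at h
    have hsq : (p - q)^2 = (pα - qα)^2 := by rw [hdiff]
    have h1 : (1-γ)*p + γ*q = (1-γ)*pα + γ*qα := by linarith [h, hK0, hsq]
    exact ⟨by linear_combination h1 + γ*hdiff, by linear_combination h1 - (1-γ)*hdiff⟩
end

section
/- Let (p₀, q₀) ∈ ℝ² with K(p₀, q₀) = 0 and define the sequence p_{2n} = p₀ + 2n(p₀−q₀) − 2n(n+γ), q_{2n} = q₀ + 2n(p₀−q₀) − 2n(n+γ−1) for n ∈ ℤ. Then K(p_{2n}, q_{2n}) = 0 for every n ∈ ℤ. -/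
open Real

theorem stmt_6 (γ : ℝ) (hγ : γ ∈ Set.Ioo (0:ℝ) 1)
    (K : ℝ → ℝ → ℝ) (hK : ∀ p q, K p q = (1/2) * (p - q)^2 + (1 - γ) * p + γ * q)
    (p₀ q₀ : ℝ) (h₀ : K p₀ q₀ = 0) (n : ℤ) :
    K (p₀ + 2*n*(p₀ - q₀) - 2*n*(n + γ)) (q₀ + 2*n*(p₀ - q₀) - 2*n*(n + γ - 1)) = 0 := by
  rw [hK] at h₀ ⊢
  push_cast
  nlinarith [h₀, sq_nonneg ((n:ℝ))]
end

section
/- Let (p₀, q₀) be a zero of K, and define p_{2n} = p₀ + 2n(p₀−q₀) − 2n(n+γ), q_{2n} = q₀ + 2n(p₀−q₀) − 2n(n+γ−1), and the interlaced points (p_{2n+1}, q_{2n+1}) := (p_{2n}, q_{2n+2}). Then K(p_{2n+1}, q_{2n+1}) = 0 for every n ∈ ℤ, i.e. K(p_{2n}, q_{2n+2}) = 0. -/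
open Real

theorem stmt_7 (γ : ℝ) (hγ : γ ∈ Set.Ioo (0:ℝ) 1)
    (K : ℝ → ℝ → ℝ) (hK : ∀ p q, K p q = (1/2) * (p - q)^2 + (1 - γ) * p + γ * q)
    (p₀ q₀ : ℝ) (h₀ : K p₀ q₀ = 0)
    (p2 q2 : ℤ → ℝ)
    (hp2 : ∀ n : ℤ, p2 n = p₀ + 2*n*(p₀ - q₀) - 2*n*(n + γ))
    (hq2 : ∀ n : ℤ, q2 n = q₀ + 2*n*(p₀ - q₀) - 2*n*(n + γ - 1)) (n : ℤ) :
    K (p2 n) (q2 (n + 1)) = 0 := by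
  rw [hK] at h₀ ⊢
  rw [hp2, hq2]
  push_cast
  ring_nf
  ring_nf at h₀
  nlinarith [h₀, sq_nonneg ((n:ℝ))]
end

section
/- Starting from (p₀,q₀) = (0,0) (which is a zero of K since K(0,0)=0), the coefficients in the sequence satisfy p_{2n} = −2n(n+γ) and q_{2n} = −2n(n+γ−1), and the alternating sum ∑_{n∈ℤ} (−1)ⁿ exp(pₙx₀ + qₙy₀), with (p_{2n+1},q_{2n+1}) = (p_{2n},q_{2n+2}), equals 2·∑_{n∈ℤ} sinh((2n+γ)y₀)·exp(−2n(n+γ)t₀ − γy₀), where t₀ = x₀ + y₀. -/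
open Real

/-- Summability of `exp` of a negative-leading-coefficient quadratic over `ℤ`. -/
lemma summable_exp_quad_aux (a b : ℝ) (ha : 0 < a) :
    Summable fun m : ℤ => Real.exp (-a * m ^ 2 + b * m) := by
  have h := summable_pow_mul_jacobiTheta₂_term_bound (|b| / (2 * π)) (T := a / π)
    (div_pos ha pi_pos) 0
  simp only [pow_zero, one_mul] at h
  simp only [Int.cast_abs] at h
  refine h.of_nonneg_of_le (fun m => (Real.exp_pos _).le) (fun m => ?_)
  rw [Real.exp_le_exp]
  have hπ : (π : ℝ) ≠ 0 := Real.pi_ne_zero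
  have h1 : -π * (a / π * (m : ℝ) ^ 2 - 2 * (|b| / (2 * π)) * |(m : ℝ)|)
      = -a * (m : ℝ) ^ 2 + |b| * |(m : ℝ)| := by
    field_simp
    ring
  rw [h1]
  have : b * (m : ℝ) ≤ |b| * |(m : ℝ)| := by
    calc b * (m : ℝ) ≤ |b * (m : ℝ)| := le_abs_self _
    _ = |b| * |(m : ℝ)| := abs_mul _ _
  linarith

theorem stmt_9 (γ x₀ y₀ t₀ : ℝ) (hγ : γ ∈ Set.Ioo (0:ℝ) 1)
    (hx₀ : 0 < x₀) (hy₀ : 0 < y₀) (ht₀ : t₀ = x₀ + y₀)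
    (p q : ℤ → ℝ)
    (hpe : ∀ m : ℤ, p (2*m) = -2*m*(m + γ))
    (hqe : ∀ m : ℤ, q (2*m) = -2*m*(m + γ - 1))
    (hpo : ∀ m : ℤ, p (2*m + 1) = p (2*m))
    (hqo : ∀ m : ℤ, q (2*m + 1) = q (2*m + 2)) :
    ∑' n : ℤ, (-1 : ℝ)^n * Real.exp (p n * x₀ + q n * y₀)
      = 2 * ∑' n : ℤ, Real.sinh ((2*n + γ) * y₀) * Real.exp (-2*n*(n + γ)*t₀ - γ*y₀) := by
  have ht₀pos : 0 < t₀ := by rw [ht₀]; linarith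
  set f : ℤ → ℝ := fun n => (-1 : ℝ)^n * Real.exp (p n * x₀ + q n * y₀) with hf
  set A : ℤ → ℝ := fun m => -(2*t₀) * m ^ 2 + (2*y₀ - 2*γ*t₀) * m with hA
  set B : ℤ → ℝ := fun m => (-(2*t₀) * m ^ 2 + (-2*y₀ - 2*γ*t₀) * m) + (-(2*γ*y₀)) with hB
  -- even and odd values of f
  have hfe : ∀ m : ℤ, f (2*m) = Real.exp (A m) := by
    intro m
    have he : Even (2*m) := ⟨m, two_mul m⟩
    simp only [hf, hA, he.neg_one_zpow, one_mul, hpe m, hqe m, ht₀]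
    congr 1
    push_cast
    ring
  have hfo : ∀ m : ℤ, f (2*m + 1) = -Real.exp (B m) := by
    intro m
    have ho : Odd (2*m + 1) := ⟨m, rfl⟩
    have h2 : (2*(m+1) : ℤ) = 2*m + 2 := by ring
    simp only [hf, hB, ho.neg_one_zpow, hpo m, hqo m, hpe m, ← h2, hqe (m+1), ht₀]
    rw [neg_one_mul]
    congr 2
    push_cast
    ring
  -- summability of even and odd parts
  have hsA : Summable fun m : ℤ => Real.exp (A m) := by
    simpa only [hA] using summable_exp_quad_aux (2*t₀) (2*y₀ - 2*γ*t₀) (by linarith)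
  have hsB : Summable fun m : ℤ => Real.exp (B m) := by
    have := (summable_exp_quad_aux (2*t₀) (-2*y₀ - 2*γ*t₀) (by linarith)).mul_right
      (Real.exp (-(2*γ*y₀)))
    refine this.congr fun m => ?_
    rw [← Real.exp_add]
  -- pass through the equivalence ℤ ≃ ℤ × Fin 2
  set e := (Int.divModEquiv 2).symm with he
  have hee : ∀ m : ℤ, ∀ k : Fin 2, e (m, k) = 2*m + (k : ℤ) := by
    intro m k
    simp [he, Int.divModEquiv]
    ring
  set F : ℤ × Fin 2 → ℝ := fun x => f (e x) with hF
  have hF0 : ∀ m : ℤ, F (m, 0) = Real.exp (A m) := by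
    intro m
    simp only [hF, hee m 0]
    rw [show (2*m + ((0 : Fin 2) : ℤ)) = 2*m by simp]
    exact hfe m
  have hF1 : ∀ m : ℤ, F (m, 1) = -Real.exp (B m) := by
    intro m
    simp only [hF, hee m 1]
    rw [show (2*m + ((1 : Fin 2) : ℤ)) = 2*m + 1 by simp]
    exact hfo m
  have hFsum : Summable F := by
    apply Summable.of_norm
    rw [summable_prod_of_nonneg (fun x => norm_nonneg _)]
    constructor
    · intro m
      exact Summable.of_finite
    · refine (hsA.add hsB).congr fun m => ?_
      rw [tsum_fintype, Fin.sum_univ_two, hF0, hF1]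
      simp [Real.norm_eq_abs, abs_of_pos, Real.exp_pos]
  have hfsum : HasSum f (∑' x, F x) := e.hasSum_iff.mp hFsum.hasSum
  have hg : HasSum (fun m : ℤ => Real.exp (A m) - Real.exp (B m)) (∑' x, F x) := by
    refine hFsum.hasSum.prod_fiberwise fun m => ?_
    have h := hasSum_fintype (fun k : Fin 2 => F (m, k))
    rwa [Fin.sum_univ_two, hF0, hF1, ← sub_eq_add_neg] at h
  rw [hfsum.tsum_eq, ← hg.tsum_eq]
  rw [← tsum_mul_left]
  refine tsum_congr fun m => ?_
  rw [Real.sinh_eq]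
  rw [show (2 : ℝ) * ((Real.exp ((2*m + γ)*y₀) - Real.exp (-((2*m + γ)*y₀)))/2
      * Real.exp (-2*m*(m + γ)*t₀ - γ*y₀))
    = Real.exp ((2*m + γ)*y₀) * Real.exp (-2*m*(m + γ)*t₀ - γ*y₀)
      - Real.exp (-((2*m + γ)*y₀)) * Real.exp (-2*m*(m + γ)*t₀ - γ*y₀) by ring]
  rw [← Real.exp_add, ← Real.exp_add]
  congr 2 <;> ring
end

section
/- For γ ∈ (0,1), x₀ > 0, y₀ > 0, t₀ = x₀+y₀, the two series expressions for the persistence probability agree: 2·∑_{n∈ℤ} sinh((2n+γ)y₀)·exp(−2n(n+γ)t₀ − γy₀) = 2·∑_{n∈ℤ} sinh(γ(y₀+2nt₀))·exp(−2(ny₀ + n²t₀) − γy₀). -/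
open Real

lemma summable_quad (a b : ℝ) (ha : 0 < a) :
    Summable fun n : ℤ => Real.exp (-a * n^2 + b * n) := by
  have hτ : (0:ℝ) < ((a/π : ℝ) * Complex.I).im := by
    simp [Complex.mul_I_im, div_pos ha Real.pi_pos]
  have h := (summable_jacobiTheta₂_term_iff ((-b/(2*π) : ℝ) * Complex.I)
    ((a/π : ℝ) * Complex.I)).mpr hτ
  rw [← summable_norm_iff] at h
  convert h using 2 with n
  rw [norm_jacobiTheta₂_term]
  congr 1
  simp only [Complex.mul_I_im, Complex.ofReal_re]
  field_simp
  ring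

theorem stmt_10 (γ x₀ y₀ t₀ : ℝ) (hγ : γ ∈ Set.Ioo (0:ℝ) 1)
    (hx₀ : 0 < x₀) (hy₀ : 0 < y₀) (ht₀ : t₀ = x₀ + y₀) :
    2 * ∑' n : ℤ, Real.sinh ((2*n + γ) * y₀) * Real.exp (-2*n*(n + γ)*t₀ - γ*y₀)
      = 2 * ∑' n : ℤ, Real.sinh (γ * (y₀ + 2*n*t₀)) * Real.exp (-2*(n*y₀ + n^2*t₀) - γ*y₀) := by
  have ht : 0 < t₀ := by rw [ht₀]; positivity
  set f : ℤ → ℝ := fun n => Real.exp (-(2*t₀) * n^2 + (2*y₀ - 2*γ*t₀) * n) with hf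
  set g : ℤ → ℝ := fun n => Real.exp (-2*γ*y₀) * Real.exp (-(2*t₀) * n^2 + (-2*y₀ - 2*γ*t₀) * n) with hg
  have hfs : Summable f := summable_quad _ _ (by linarith)
  have hgs : Summable g := (summable_quad (2*t₀) (-2*y₀ - 2*γ*t₀) (by linarith)).mul_left _
  have hL : ∀ n : ℤ, Real.sinh ((2*n + γ) * y₀) * Real.exp (-2*n*(n + γ)*t₀ - γ*y₀)
      = (f n - g n) / 2 := by
    intro n
    simp only [Real.sinh_eq, hf, hg]
    rw [div_mul_eq_mul_div, sub_mul, ← Real.exp_add, ← Real.exp_add, ← Real.exp_add]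
    congr 2 <;> (rw [Real.exp_eq_exp]; push_cast; ring)
  have hR : ∀ n : ℤ, Real.sinh (γ * (y₀ + 2*n*t₀)) * Real.exp (-2*(n*y₀ + n^2*t₀) - γ*y₀)
      = (f (-n) - g n) / 2 := by
    intro n
    simp only [Real.sinh_eq, hf, hg]
    rw [div_mul_eq_mul_div, sub_mul, ← Real.exp_add, ← Real.exp_add, ← Real.exp_add]
    congr 2 <;> (rw [Real.exp_eq_exp]; push_cast; ring)
  have hfneg : Summable (fun n : ℤ => f (-n)) := hfs.comp_injective neg_injective
  have key : ∑' n : ℤ, f (-n) = ∑' n : ℤ, f n :=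
    (Equiv.neg ℤ).tsum_eq f
  calc 2 * ∑' n : ℤ, Real.sinh ((2*n + γ) * y₀) * Real.exp (-2*n*(n + γ)*t₀ - γ*y₀)
      = 2 * ∑' n : ℤ, (f n - g n) / 2 := by rw [tsum_congr hL]
    _ = 2 * (((∑' n : ℤ, f n) - ∑' n : ℤ, g n) / 2) := by
        rw [tsum_div_const, Summable.tsum_sub hfs hgs]
    _ = 2 * (((∑' n : ℤ, f (-n)) - ∑' n : ℤ, g n) / 2) := by rw [key]
    _ = 2 * ∑' n : ℤ, (f (-n) - g n) / 2 := by
        rw [tsum_div_const, Summable.tsum_sub hfneg hgs]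
    _ = _ := by rw [tsum_congr hR]
end

section
/- For α ∈ (0, π/2), the second derivative in q of G(q, α) := P⁺(q)cos α + q sin α, evaluated at q = q(α), equals −(cos α + sin α)³ / cos²α; in particular it is strictly negative. -/
open Real

theorem stmt_14 (γ : ℝ) (hγ : γ ∈ Set.Ioo (0:ℝ) 1)
    (α : ℝ) (hα : α ∈ Set.Ioo 0 (π/2))
    (G : ℝ → ℝ)
    (hG : ∀ q, G q = (γ - 1 + q + Real.sqrt ((1 - γ)^2 - 2*q)) * Real.cos α + q * Real.sin α)
    (qα : ℝ) (hqα : qα = (1 - γ)^2/2 - 1/(2*(1 + Real.tan α)^2)) :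
    deriv (deriv G) qα = -(Real.cos α + Real.sin α)^3 / (Real.cos α)^2 ∧
    deriv (deriv G) qα < 0 := by
  obtain ⟨hα0, hα2⟩ := hα
  have hπ : 0 < π := Real.pi_pos
  have hcos : 0 < Real.cos α := Real.cos_pos_of_mem_Ioo ⟨by linarith, hα2⟩
  have hsin : 0 < Real.sin α := Real.sin_pos_of_pos_of_lt_pi hα0 (by linarith)
  have htan : 0 < Real.tan α := Real.tan_pos_of_pos_of_lt_pi_div_two hα0 hα2
  set c := (1 - γ)^2 with hc
  set T := 1 + Real.tan α with hT
  have hT0 : 0 < T := by positivity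
  have hs : c - 2*qα = 1/T^2 := by rw [hqα]; field_simp; ring
  have hsq : Real.sqrt (c - 2*qα) = 1/T := by
    have h1 : c - 2*qα = (1/T)^2 := by rw [hs, div_pow, one_pow]
    rw [h1, Real.sqrt_sq (by positivity)]
  have key : ∀ q ∈ Set.Iio (c/2), HasDerivAt G
      ((1 + -(Real.sqrt (c - 2*q))⁻¹) * Real.cos α + Real.sin α) q := by
    intro q hq
    have hs' : 0 < c - 2*q := by
      have := hq.out; linarith
    have h1 : HasDerivAt (fun q : ℝ => c - 2*q) (-2) q := by
      simpa using (hasDerivAt_id q).const_mul (2:ℝ) |>.const_sub c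
    have h2 : HasDerivAt (fun q : ℝ => Real.sqrt (c - 2*q))
        (1/(2*Real.sqrt (c - 2*q)) * (-2)) q :=
      (Real.hasDerivAt_sqrt hs'.ne').comp q h1
    have h3 : HasDerivAt (fun q : ℝ => (γ - 1 + q + Real.sqrt (c - 2*q)) * Real.cos α
        + q * Real.sin α)
        ((1 + 1/(2*Real.sqrt (c - 2*q)) * (-2)) * Real.cos α + Real.sin α) q := by
      have h4 : HasDerivAt (fun q : ℝ => γ - 1 + q + Real.sqrt (c - 2*q))
          (1 + 1/(2*Real.sqrt (c - 2*q)) * (-2)) q :=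
        ((hasDerivAt_id q).const_add (γ - 1)).add h2
      simpa [Pi.add_def] using (h4.mul_const (Real.cos α)).add ((hasDerivAt_id q).mul_const (Real.sin α))
    have hGe : G = fun q => (γ - 1 + q + Real.sqrt (c - 2*q)) * Real.cos α + q * Real.sin α :=
      funext hG
    rw [hGe]
    convert h3 using 1
    have hsq0 : Real.sqrt (c - 2*q) ≠ 0 := (Real.sqrt_pos.mpr hs').ne'
    field_simp
  have hqmem : qα ∈ Set.Iio (c/2) := by
    rw [hqα]
    have : 0 < 1/(2*T^2) := by positivity
    simp only [Set.mem_Iio]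
    linarith
  have hev : deriv G =ᶠ[nhds qα]
      (fun q => (1 + -(Real.sqrt (c - 2*q))⁻¹) * Real.cos α + Real.sin α) := by
    filter_upwards [isOpen_Iio.mem_nhds hqmem] with q hq
    exact (key q hq).deriv
  have hsval : 0 < c - 2*qα := by rw [hs]; positivity
  have hsq0 : Real.sqrt (c - 2*qα) ≠ 0 := (Real.sqrt_pos.mpr hsval).ne'
  -- derivative of D1 at qα
  have h1 : HasDerivAt (fun q : ℝ => c - 2*q) (-2) qα := by
    simpa using (hasDerivAt_id qα).const_mul (2:ℝ) |>.const_sub c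
  have h2 : HasDerivAt (fun q : ℝ => Real.sqrt (c - 2*q))
      (1/(2*Real.sqrt (c - 2*qα)) * (-2)) qα :=
    (Real.hasDerivAt_sqrt hsval.ne').comp qα h1
  have h3 : HasDerivAt (fun q : ℝ => (Real.sqrt (c - 2*q))⁻¹)
      (-(1/(2*Real.sqrt (c - 2*qα)) * (-2)) / (Real.sqrt (c - 2*qα))^2) qα :=
    h2.inv hsq0
  have h4 : HasDerivAt (fun q : ℝ => (1 + -(Real.sqrt (c - 2*q))⁻¹) * Real.cos α + Real.sin α)
      (-((-(1/(2*Real.sqrt (c - 2*qα)) * (-2)) / (Real.sqrt (c - 2*qα))^2)) * Real.cos α) qα := by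
    exact (((h3.neg).const_add 1).mul_const (Real.cos α)).add_const (Real.sin α)
  have hderiv2 : deriv (deriv G) qα = -T^3 * Real.cos α := by
    rw [hev.deriv_eq, h4.deriv, hsq]
    field_simp
  have hcs : Real.cos α + Real.sin α = Real.cos α * T := by
    rw [hT, Real.tan_eq_sin_div_cos]
    field_simp
  have hval : deriv (deriv G) qα = -(Real.cos α + Real.sin α)^3 / (Real.cos α)^2 := by
    rw [hderiv2, hcs]
    field_simp
  refine ⟨hval, ?_⟩
  rw [hderiv2]
  have : 0 < T^3 * Real.cos α := by positivity
  linarith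
end
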